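/- Higher quantum Serre relations: for distinct i, j ∈ I and integers n ≥ 0, m > −n⟨i,j'⟩, the element e_{i,j;n,m} = ∑_{r+s=m} (−1)^r π_i^{nrp(i)p(j)+binom(r,2)p(i)} (π_i q_i)^{−r(n⟨i,j'⟩+m−1)} E_i^{(r)} E_j^{(n)} E_i^{(s)} equals 0 in the quantum covering group U. -/

import Mathlib

/- The ring `Aq = ℚ(q)[π]/(π²-1) ≅ ℚ(q) × ℚ(q)` (via π ↦ (1, -1), an isomorphism
since 2 is invertible).  Division/inversion is componentwise (the total fraction ring). -/
noncomputable section

abbrev Aq : Type := RatFunc ℚ × RatFunc ℚ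

/-- the element `q` -/
def qA : Aq := (RatFunc.X, RatFunc.X)

/-- the element `π`, satisfying `π² = 1` -/
def pA : Aq := (1, -1)

/-- The `(q,π)`-binomial coefficient
`[[a;t]] = (∏_{s=0}^{t-1} ((πq)^{a-s} - q^{s-a})) / (∏_{s=1}^{t} ((πq)^s - q^{-s}))`. -/
def qbinom (a : ℤ) (t : ℕ) : Aq :=
  (∏ s ∈ Finset.range t, ((pA * qA) ^ (a - (s : ℤ)) - qA ^ ((s : ℤ) - a))) /
  (∏ s ∈ Finset.range t, ((pA * qA) ^ ((s : ℤ) + 1) - qA ^ (-((s : ℤ) + 1))))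


/-- A super Cartan datum: `I = I₀ ⊔ I₁` (parity `p : I → {0,1}`), symmetric form `Bf`,
with `Bf i i = 2 d i > 0`, `⟨i,j'⟩ = aij i j = 2(i·j)/(i·i) ∈ -ℕ` for `i ≠ j`,
even for odd `i`, and `I₁ ≠ ∅`. -/
structure SCD (I : Type) (Bf : I → I → ℤ) (p d : I → ℕ) (aij : I → I → ℤ) : Prop where
  symm : ∀ i j, Bf i j = Bf j i
  diag : ∀ i, Bf i i = 2 * (d i : ℤ)
  dpos : ∀ i, 0 < d i
  div : ∀ i j, (d i : ℤ) * aij i j = Bf i j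
  offdiag : ∀ i j, i ≠ j → aij i j ≤ 0
  par_le : ∀ i, p i ≤ 1
  odd_even : ∀ i j, p i = 1 → Even (aij i j)
  odd_nonempty : ∃ i, p i = 1

/-- the pairing `|w|·|w'|` of the weights of two words -/
def wtB {I : Type} (Bf : I → I → ℤ) (w w' : FreeMonoid I) : ℤ :=
  ((FreeMonoid.toList w).map fun i =>
    ((FreeMonoid.toList w').map fun j => Bf i j).sum).sum

/-- the parity `p(w)` of a word -/
def par {I : Type} (p : I → ℕ) (w : FreeMonoid I) : ℕ :=
  ((FreeMonoid.toList w).map p).sum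

/-- the twisting factor `q^{|w|·|w'|} π^{p(w)p(w')}` -/
def tw {I : Type} (Bf : I → I → ℤ) (p : I → ℕ) (w w' : FreeMonoid I) : Aq :=
  qA ^ wtB Bf w w' * pA ^ (par p w * par p w')

/-- the free associative superalgebra `'f` on generators `θ_i`, realized as the monoid
algebra of the free monoid on `I` (so the words are the standard homogeneous basis) -/
abbrev FF (I : Type) : Type := MonoidAlgebra Aq (FreeMonoid I)

/-- the basis element of `'f` corresponding to a word `w` -/
def ofW {I : Type} (w : FreeMonoid I) : FF I := MonoidAlgebra.of Aq (FreeMonoid I) w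

/-- the generator `θ_i` -/
def th {I : Type} (i : I) : FF I := ofW (FreeMonoid.of i)

/-- `q_i = q^{i·i/2}` -/
def qi {I : Type} (d : I → ℕ) (i : I) : Aq := qA ^ d i

/-- `π_i = π^{p(i)}` -/
def pi' {I : Type} (p : I → ℕ) (i : I) : Aq := pA ^ p i

/-- `[m]_i = ((π_i q_i)^m - q_i^{-m})/(π_i q_i - q_i^{-1})` -/
def qinti {I : Type} (p d : I → ℕ) (i : I) (m : ℕ) : Aq :=
  ((pi' p i * qi d i) ^ m - qi d i ^ (-(m : ℤ))) / (pi' p i * qi d i - (qi d i)⁻¹)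

/-- `[m]_i! = ∏_{s=1}^m [s]_i` -/
def qfacti {I : Type} (p d : I → ℕ) (i : I) (m : ℕ) : Aq :=
  ∏ s ∈ Finset.range m, qinti p d i (s + 1)

/-- the divided power `θ_i^{(n)} = θ_i^n/[n]_i!` -/
def thpow {I : Type} (p d : I → ℕ) (i : I) (n : ℕ) : FF I :=
  (qfacti p d i n)⁻¹ • th i ^ n

/-- The defining relations (a)-(f) of the quantum covering group on a family of
elements `E_i, F_i, K_μ, J_μ` of an `Aq`-algebra `T`, for a root datum with coweight
lattice `Y`, weight lattice `X`, pairing `pair`, and embeddings `em : I → X`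
(`i ↦ i'`) and `ey : I → Y` (`i ↦ i`); here `K̃_i = K_{d_i i}`, `J̃_i = J_{d_i i}`. -/
def URels (I : Type) [DecidableEq I] (p d : I → ℕ)
    (Y : Type) [AddCommGroup Y] (X : Type) [AddCommGroup X]
    (pair : Y → X → ℤ) (em : I → X) (ey : I → Y)
    (T : Type) [Ring T] [Algebra Aq T]
    (e f : I → T) (k j : Y → T) : Prop :=
  (k 0 = 1) ∧
  (∀ μ μ', k μ * k μ' = k (μ + μ')) ∧
  (∀ μ, j (2 • μ) = 1) ∧
  (∀ μ μ', j μ * j μ' = j (μ + μ')) ∧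
  (∀ μ μ', j μ * k μ' = k μ' * j μ) ∧
  (∀ μ i, k μ * e i = qA ^ pair μ (em i) • (e i * k μ)) ∧
  (∀ μ i, j μ * e i = pA ^ pair μ (em i) • (e i * j μ)) ∧
  (∀ μ i, k μ * f i = qA ^ (-pair μ (em i)) • (f i * k μ)) ∧
  (∀ μ i, j μ * f i = pA ^ (-pair μ (em i)) • (f i * j μ)) ∧
  (∀ i i', e i * f i' - pA ^ (p i * p i') • (f i' * e i) =
    if i = i' then
      ((pi' p i * qi d i - (qi d i)⁻¹)⁻¹ : Aq) •
        (j (d i • ey i) * k (d i • ey i) - k (-(d i • ey i : Y)))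
    else 0)

/-- the divided power `E_i^{(n)} = E_i^n/[n]_i!` -/
def edp {I : Type} (p d : I → ℕ) {U : Type} [Ring U] [Algebra Aq U]
    (e : I → U) (i : I) (n : ℕ) : U :=
  (qfacti p d i n)⁻¹ • e i ^ n

open Finset

namespace HS

lemma fst_pow (x : Aq) (n : ℕ) : (x ^ n).1 = x.1 ^ n := by
  induction n with
  | zero => simp
  | succ k ih => simp [pow_succ, Prod.fst_mul, ih]

lemma snd_pow (x : Aq) (n : ℕ) : (x ^ n).2 = x.2 ^ n := by
  induction n with
  | zero => simp
  | succ k ih => simp [pow_succ, Prod.snd_mul, ih]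

lemma isUnit_of_components {x : Aq} (h1 : x.1 ≠ 0) (h2 : x.2 ≠ 0) : IsUnit x := by
  refine IsUnit.of_mul_eq_one (a := x) (x.1⁻¹, x.2⁻¹) ?_
  ext
  · simp [Prod.fst_mul, mul_inv_cancel₀ h1]
  · simp [Prod.snd_mul, mul_inv_cancel₀ h2]

lemma pA_mul_pA : pA * pA = 1 := by
  ext <;> simp [pA, Prod.fst_mul, Prod.snd_mul]

lemma isUnit_pA : IsUnit pA := IsUnit.of_mul_eq_one (a := pA) pA pA_mul_pA

lemma pA_inv : pA⁻¹ = pA := inv_eq_of_mul_eq_one_right pA_mul_pA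

lemma isUnit_qA : IsUnit qA := by
  apply isUnit_of_components <;> simp [qA, RatFunc.X_ne_zero]

/-- key transcendence fact -/
lemma eps_mul_X_pow_ne_one (ε : RatFunc ℚ) (hε : ε = 1 ∨ ε = -1) (k : ℕ) (hk : 0 < k) :
    ε * RatFunc.X ^ k ≠ 1 := by
  intro h
  have hXk : (RatFunc.X : RatFunc ℚ) ^ k = algebraMap (Polynomial ℚ) _ (Polynomial.X ^ k) := by
    simp [RatFunc.algebraMap_X]
  rcases hε with h1 | h1
  · rw [h1, one_mul, hXk] at h
    have : (Polynomial.X ^ k : Polynomial ℚ) = 1 := by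
      apply RatFunc.algebraMap_injective
      simpa using h
    have := congrArg Polynomial.natDegree this
    simp [Polynomial.natDegree_X_pow] at this
    omega
  · rw [h1] at h
    have h' : (RatFunc.X : RatFunc ℚ) ^ k = -1 := by
      have := congrArg (fun z => (-1 : RatFunc ℚ) * z) h
      simpa [neg_mul] using this
    rw [hXk] at h'
    have : (Polynomial.X ^ k : Polynomial ℚ) = -1 := by
      apply RatFunc.algebraMap_injective
      simpa using h'
    have := congrArg Polynomial.natDegree this
    simp [Polynomial.natDegree_X_pow] at this
    omega

lemma eps_sub_ne (ε : RatFunc ℚ) (hε : ε = 1 ∨ ε = -1) (k : ℕ) (hk : 0 < k) :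
    ε * RatFunc.X ^ k - (RatFunc.X ^ k)⁻¹ ≠ 0 := by
  intro h
  have hX : (RatFunc.X : RatFunc ℚ) ^ k ≠ 0 := pow_ne_zero _ RatFunc.X_ne_zero
  apply eps_mul_X_pow_ne_one ε hε (k + k) (by omega)
  have := sub_eq_zero.mp h
  calc ε * RatFunc.X ^ (k + k) = (ε * RatFunc.X ^ k) * RatFunc.X ^ k := by ring
  _ = (RatFunc.X ^ k)⁻¹ * RatFunc.X ^ k := by rw [this]
  _ = 1 := inv_mul_cancel₀ hX

lemma Xpow_ne (k : ℕ) : (RatFunc.X : RatFunc ℚ) ^ k ≠ 0 :=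
  pow_ne_zero _ RatFunc.X_ne_zero

end HS

namespace HS

variable (P D : ℕ)

def piP : Aq := pA ^ P

def uA : Aq := qA ^ D
def vA : Aq := pA ^ P * qA ^ D
def sNum (m : ℕ) : Aq := vA P D ^ m - (uA D ^ m)⁻¹
def sDen : Aq := vA P D - (uA D)⁻¹
def sInt (m : ℕ) : Aq := sNum P D m / sDen P D
def sFact (m : ℕ) : Aq := ∏ s ∈ range m, sInt P D (s + 1)

def sBcAux (f : ℕ → Aq) (s : ℕ) : ℕ → Aq :=
  Nat.rec 1 (fun r' ihr => vA P D ^ (r' + 1) * f (r' + 1) + (uA D ^ (s + 1))⁻¹ * ihr)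

def sBc : ℕ → ℕ → Aq :=
  Nat.rec (fun _ => 1) (fun s ih => sBcAux P D ih s)

lemma vA_fst : (vA P D).1 = RatFunc.X ^ D := by
  simp [vA, Prod.fst_mul, fst_pow, pA, qA]

lemma vA_snd : (vA P D).2 = (-1) ^ P * RatFunc.X ^ D := by
  simp [vA, Prod.snd_mul, snd_pow, pA, qA]

lemma uA_fst : (uA D).1 = RatFunc.X ^ D := by simp [uA, fst_pow, qA]
lemma uA_snd : (uA D).2 = RatFunc.X ^ D := by simp [uA, snd_pow, qA]

lemma neg_one_pow_cases (k : ℕ) : ((-1 : RatFunc ℚ)) ^ k = 1 ∨ ((-1 : RatFunc ℚ)) ^ k = -1 := by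
  rcases Nat.even_or_odd k with h | h
  · left; exact h.neg_one_pow
  · right; exact h.neg_one_pow

lemma isUnit_vA : IsUnit (vA P D) := by
  apply isUnit_of_components
  · rw [vA_fst]; exact Xpow_ne D
  · rw [vA_snd]
    rcases neg_one_pow_cases P with h | h <;> rw [h] <;>
      simp only [one_mul, neg_mul, neg_ne_zero] <;> exact Xpow_ne D

lemma isUnit_uA : IsUnit (uA D) := by
  apply isUnit_of_components
  · rw [uA_fst]; exact Xpow_ne D
  · rw [uA_snd]; exact Xpow_ne D

lemma isUnit_sDen (hD : 0 < D) : IsUnit (sDen P D) := by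
  apply isUnit_of_components
  · rw [show (sDen P D).1 = 1 * RatFunc.X ^ D - (RatFunc.X ^ D)⁻¹ by
      simp [sDen, Prod.fst_sub, vA_fst, Prod.fst_inv, uA_fst]]
    exact eps_sub_ne 1 (Or.inl rfl) D hD
  · rw [show (sDen P D).2 = (-1) ^ P * RatFunc.X ^ D - (RatFunc.X ^ D)⁻¹ by
      simp [sDen, Prod.snd_sub, vA_snd, Prod.snd_inv, uA_snd]]
    exact eps_sub_ne _ (neg_one_pow_cases P) D hD

lemma isUnit_sNum (hD : 0 < D) {m : ℕ} (hm : 0 < m) : IsUnit (sNum P D m) := by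
  apply isUnit_of_components
  · rw [show (sNum P D m).1 = 1 * RatFunc.X ^ (D * m) - (RatFunc.X ^ (D * m))⁻¹ by
      simp [sNum, Prod.fst_sub, fst_pow, vA_fst, Prod.fst_inv, uA_fst, ← pow_mul]]
    exact eps_sub_ne 1 (Or.inl rfl) _ (by positivity)
  · rw [show (sNum P D m).2 = (-1) ^ (P * m) * RatFunc.X ^ (D * m) - (RatFunc.X ^ (D * m))⁻¹ by
      simp [sNum, Prod.snd_sub, snd_pow, vA_snd, Prod.snd_inv, uA_snd, mul_pow, ← pow_mul]]
    exact eps_sub_ne _ (neg_one_pow_cases _) _ (by positivity)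

lemma isUnit_sInt (hD : 0 < D) {m : ℕ} (hm : 0 < m) : IsUnit (sInt P D m) :=
  (isUnit_sNum P D hD hm).div (isUnit_sDen P D hD)

lemma sInt_zero : sInt P D 0 = 0 := by
  simp [sInt, sNum, div_eq_mul_inv]

lemma sInt_one (hD : 0 < D) : sInt P D 1 = 1 := by
  rw [sInt, sNum, pow_one, pow_one]
  exact (isUnit_sDen P D hD).div_self

/-- the key quantum-integer addition identity `[s+r] = v^r [s] + u^{-s} [r]` -/
lemma SI1 (s r : ℕ) :
    sInt P D (s + r) = vA P D ^ r * sInt P D s + (uA D ^ s)⁻¹ * sInt P D r := by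
  simp only [sInt, div_eq_mul_inv]
  have h : sNum P D (s + r) = vA P D ^ r * sNum P D s + (uA D ^ s)⁻¹ * sNum P D r := by
    simp only [sNum, pow_add, mul_inv]; ring
  rw [h]; ring

lemma sFact_zero : sFact P D 0 = 1 := by simp [sFact]

lemma sFact_succ (m : ℕ) : sFact P D (m + 1) = sFact P D m * sInt P D (m + 1) :=
  prod_range_succ _ _

lemma isUnit_sFact (hD : 0 < D) (m : ℕ) : IsUnit (sFact P D m) := by
  induction m with
  | zero => simp [sFact_zero]
  | succ k ih => rw [sFact_succ]; exact ih.mul (isUnit_sInt P D hD k.succ_pos)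

lemma sBc_zero_left (r : ℕ) : sBc P D 0 r = 1 := rfl
lemma sBc_zero_right (s : ℕ) : sBc P D s 0 = 1 := by cases s <;> rfl
lemma sBc_succ_succ (s r : ℕ) :
    sBc P D (s + 1) (r + 1) =
      vA P D ^ (r + 1) * sBc P D s (r + 1) + (uA D ^ (s + 1))⁻¹ * sBc P D (s + 1) r := rfl

/-- defining property: `[s]! [r]! (s+r choose r) = (s+r)!` -/
lemma sBc_spec : ∀ s r : ℕ, sFact P D s * sFact P D r * sBc P D s r = sFact P D (s + r)
  | 0, r => by simp [sBc_zero_left, sFact_zero]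
  | s + 1, 0 => by simp [sBc_zero_right, sFact_zero]
  | s + 1, r + 1 => by
    rw [sBc_succ_succ, mul_add]
    have h1 := sBc_spec s (r + 1)
    have h2 := sBc_spec (s + 1) r
    have e1 : sFact P D (s + 1) * sFact P D (r + 1) * (vA P D ^ (r + 1) * sBc P D s (r + 1)) =
        vA P D ^ (r + 1) * sInt P D (s + 1) * (sFact P D s * sFact P D (r + 1) * sBc P D s (r + 1)) := by
      rw [sFact_succ P D s]; ring
    have e2 : sFact P D (s + 1) * sFact P D (r + 1) * ((uA D ^ (s + 1))⁻¹ * sBc P D (s + 1) r) =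
        (uA D ^ (s + 1))⁻¹ * sInt P D (r + 1) * (sFact P D (s + 1) * sFact P D r * sBc P D (s + 1) r) := by
      rw [sFact_succ P D r]; ring
    rw [e1, e2, h1, h2, show s + (r + 1) = s + r + 1 by omega, show s + 1 + r = s + r + 1 by omega,
      show s + 1 + (r + 1) = (s + r + 1) + 1 by omega, sFact_succ P D (s + r + 1)]
    have := SI1 P D (s + 1) (r + 1)
    rw [show s + 1 + (r + 1) = s + r + 1 + 1 by omega] at this
    rw [this]
    ring

lemma unit_cancel {c x y : Aq} (hc : IsUnit c) (h : c * x = c * y) : x = y := by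
  have := congrArg (fun z => c⁻¹ * z) h
  simpa [← mul_assoc, hc.inv_mul_cancel] using this

lemma sBc_comm (hD : 0 < D) (s r : ℕ) : sBc P D s r = sBc P D r s := by
  apply unit_cancel ((isUnit_sFact P D hD s).mul (isUnit_sFact P D hD r))
  calc sFact P D s * sFact P D r * sBc P D s r = sFact P D (s + r) := sBc_spec P D s r
  _ = sFact P D r * sFact P D s * sBc P D r s := by rw [sBc_spec, add_comm]
  _ = sFact P D s * sFact P D r * sBc P D r s := by ring

lemma sBc_one_left (hD : 0 < D) (r : ℕ) : sBc P D 1 r = sInt P D (r + 1) := by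
  induction r with
  | zero => rw [sBc_zero_right, sInt_one P D hD]
  | succ k ih =>
      rw [show (1 : ℕ) = 0 + 1 by rfl, sBc_succ_succ, sBc_zero_left, ih, pow_one,
        show k + 1 + 1 = 1 + (k + 1) by omega, SI1 P D 1 (k + 1), sInt_one P D hD,
        mul_one, pow_one]

end HS

namespace HS

variable (P D : ℕ)

lemma piP_inv : (piP P)⁻¹ = piP P := by rw [piP, ← inv_pow, pA_inv]

lemma piP_mul_vA : piP P * vA P D = uA D := by
  rw [piP, vA, uA, ← mul_assoc, ← pow_add,
    show P + P = 2 * P by omega, pow_mul, show pA ^ 2 = 1 by rw [pow_two, pA_mul_pA], one_pow,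
    one_mul]

lemma uA_pow_inv (t : ℕ) : (uA D ^ t)⁻¹ = piP P ^ t * (vA P D ^ t)⁻¹ := by
  rw [← piP_mul_vA P D, mul_pow, mul_inv, ← inv_pow, piP_inv]

lemma choose2_succ (t : ℕ) : (t + 1).choose 2 = t.choose 2 + t := by
  rw [Nat.choose_succ_succ, Nat.choose_one_right, add_comm]

lemma unit_pow_sub {x : Aq} (hx : IsUnit x) {a b : ℕ} (h : b ≤ a) :
    x ^ (a - b) = x ^ a * (x ^ b)⁻¹ := by
  apply unit_cancel (hx.pow b)
  rw [← pow_add, show b + (a - b) = a by omega]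
  calc x ^ a = x ^ a * (x ^ b * (x ^ b)⁻¹) := by rw [(hx.pow b).mul_inv_cancel, mul_one]
  _ = x ^ b * (x ^ a * (x ^ b)⁻¹) := by ring

/-- the Gauss alternating sum `∑_t (-1)^t π^{C(t,2)} v^{-t(β-1)} [β;t] = 0`, `β = b+1` -/
lemma SG (hD : 0 < D) (b : ℕ) :
    ∑ t ∈ range (b + 2),
      (-1 : Aq) ^ t * piP P ^ t.choose 2 * (vA P D ^ (t * b))⁻¹ * sBc P D t (b + 1 - t) = 0 := by
  have decomp : ∀ t ∈ range (b + 2), sBc P D t (b + 1 - t) =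
      (if t ≤ b then (uA D ^ t)⁻¹ * sBc P D t (b - t) else 0) +
      (if 1 ≤ t then vA P D ^ (b + 1 - t) * sBc P D (t - 1) (b + 1 - t) else 0) := by
    intro t ht
    rw [mem_range] at ht
    match t with
    | 0 => simp [sBc_zero_left]
    | s + 1 =>
      by_cases hs : s + 1 ≤ b
      · rw [if_pos hs, if_pos (by omega)]
        rw [show b + 1 - (s + 1) = (b - (s + 1)) + 1 by omega, sBc_succ_succ]
        rw [show s + 1 - 1 = s by omega, show b - (s + 1) + 1 = b - s by omega]
        ring
      · have hs' : s + 1 = b + 1 := by omega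
        rw [if_neg hs, if_pos (by omega), hs']
        simp [sBc_zero_right, sBc_zero_left, show b + 1 - (b + 1) = 0 by omega]
  rw [Finset.sum_congr rfl (fun t ht => by rw [decomp t ht])]
  simp only [mul_add]
  rw [Finset.sum_add_distrib]
  have e1 : ∑ t ∈ range (b + 2), (-1 : Aq) ^ t * piP P ^ t.choose 2 * (vA P D ^ (t * b))⁻¹ *
      (if t ≤ b then (uA D ^ t)⁻¹ * sBc P D t (b - t) else 0) =
      ∑ t ∈ range (b + 1), (-1 : Aq) ^ t * piP P ^ t.choose 2 * (vA P D ^ (t * b))⁻¹ *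
      ((uA D ^ t)⁻¹ * sBc P D t (b - t)) := by
    rw [Finset.sum_range_succ, if_neg (by omega), mul_zero, add_zero]
    exact Finset.sum_congr rfl (fun t ht => by rw [if_pos (by rw [mem_range] at ht; omega)])
  have e2 : ∑ t ∈ range (b + 2), (-1 : Aq) ^ t * piP P ^ t.choose 2 * (vA P D ^ (t * b))⁻¹ *
      (if 1 ≤ t then vA P D ^ (b + 1 - t) * sBc P D (t - 1) (b + 1 - t) else 0) =
      ∑ t ∈ range (b + 1), (-1 : Aq) ^ (t + 1) * piP P ^ (t + 1).choose 2 *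
        (vA P D ^ ((t + 1) * b))⁻¹ * (vA P D ^ (b - t) * sBc P D t (b - t)) := by
    rw [Finset.sum_range_succ']
    simp only [if_neg (by omega : ¬ (1 : ℕ) ≤ 0), mul_zero, add_zero]
    exact Finset.sum_congr rfl (fun t ht => by
      rw [if_pos (by omega), show t + 1 - 1 = t by omega, show b + 1 - (t + 1) = b - t by omega])
  rw [e1, e2, ← Finset.sum_add_distrib]
  apply Finset.sum_eq_zero
  intro t ht
  rw [mem_range] at ht
  have htb : t ≤ b := by omega
  have hvpow : (vA P D ^ ((t + 1) * b))⁻¹ * vA P D ^ (b - t) = (vA P D ^ (t * b))⁻¹ * (vA P D ^ t)⁻¹ := by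
    apply unit_cancel ((isUnit_vA P D).pow ((t + 1) * b))
    have hsplit : vA P D ^ ((t + 1) * b) = vA P D ^ (b - t) * (vA P D ^ (t * b) * vA P D ^ t) := by
      rw [← pow_add, ← pow_add]
      congr 1
      obtain ⟨c, rfl⟩ : ∃ c, b = t + c := ⟨b - t, by omega⟩
      rw [show t + c - t = c by omega]
      ring
    calc vA P D ^ ((t + 1) * b) * ((vA P D ^ ((t + 1) * b))⁻¹ * vA P D ^ (b - t))
        = (vA P D ^ ((t + 1) * b) * (vA P D ^ ((t + 1) * b))⁻¹) * vA P D ^ (b - t) := by ring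
      _ = vA P D ^ (b - t) := by rw [((isUnit_vA P D).pow _).mul_inv_cancel, one_mul]
      _ = vA P D ^ ((t + 1) * b) * ((vA P D ^ (t * b))⁻¹ * (vA P D ^ t)⁻¹) := by
          rw [hsplit]
          calc vA P D ^ (b - t) = vA P D ^ (b - t) *
              ((vA P D ^ (t * b) * (vA P D ^ (t * b))⁻¹) * (vA P D ^ t * (vA P D ^ t)⁻¹)) := by
                rw [((isUnit_vA P D).pow (t * b)).mul_inv_cancel,
                  ((isUnit_vA P D).pow t).mul_inv_cancel, one_mul, mul_one]
            _ = vA P D ^ (b - t) * (vA P D ^ (t * b) * vA P D ^ t) *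
                ((vA P D ^ (t * b))⁻¹ * (vA P D ^ t)⁻¹) := by ring
  rw [uA_pow_inv, pow_succ (-1 : Aq), choose2_succ, pow_add (piP P)]
  rw [show (-1 : Aq) ^ t * -1 * (piP P ^ t.choose 2 * piP P ^ t) * (vA P D ^ ((t + 1) * b))⁻¹ *
      (vA P D ^ (b - t) * sBc P D t (b - t)) =
      -((-1 : Aq) ^ t * piP P ^ t.choose 2 * piP P ^ t *
        ((vA P D ^ ((t + 1) * b))⁻¹ * vA P D ^ (b - t)) * sBc P D t (b - t)) by ring, hvpow]
  ring

/-- reflected version: `∑_s (-1)^{β-s} π^{C(β-s,2)} v^{s(β-1)} [β;s] = 0`, `β = b+1` -/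
lemma SGr (hD : 0 < D) (b : ℕ) :
    ∑ s ∈ range (b + 2),
      (-1 : Aq) ^ (b + 1 - s) * piP P ^ (b + 1 - s).choose 2 * vA P D ^ (s * b) *
        sBc P D s (b + 1 - s) = 0 := by
  rw [← Finset.sum_range_reflect]
  have key : ∀ j ∈ range (b + 2),
      (-1 : Aq) ^ (b + 1 - (b + 2 - 1 - j)) * piP P ^ (b + 1 - (b + 2 - 1 - j)).choose 2 *
        vA P D ^ ((b + 2 - 1 - j) * b) * sBc P D (b + 2 - 1 - j) (b + 1 - (b + 2 - 1 - j)) =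
      vA P D ^ ((b + 1) * b) *
        ((-1 : Aq) ^ j * piP P ^ j.choose 2 * (vA P D ^ (j * b))⁻¹ * sBc P D j (b + 1 - j)) := by
    intro j hj
    rw [mem_range] at hj
    rw [show b + 2 - 1 - j = b + 1 - j by omega, show b + 1 - (b + 1 - j) = j by omega]
    rw [sBc_comm P D hD]
    rw [show (b + 1 - j) * b = (b + 1) * b - j * b by rw [Nat.sub_mul]]
    rw [unit_pow_sub ((isUnit_vA P D)) (by exact Nat.mul_le_mul_right b (by omega))]
    ring
  rw [Finset.sum_congr rfl key, ← Finset.mul_sum, SG P D hD b, mul_zero]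

end HS

namespace HS

variable (P D : ℕ)

lemma fst_zpow (x : Aq) (n : ℤ) : (x ^ n).1 = x.1 ^ n := by
  cases n with
  | ofNat k => rw [Int.ofNat_eq_coe, zpow_natCast, zpow_natCast, fst_pow]
  | negSucc k => rw [zpow_negSucc, zpow_negSucc, Prod.fst_inv, fst_pow]

lemma snd_zpow (x : Aq) (n : ℤ) : (x ^ n).2 = x.2 ^ n := by
  cases n with
  | ofNat k => rw [Int.ofNat_eq_coe, zpow_natCast, zpow_natCast, snd_pow]
  | negSucc k => rw [zpow_negSucc, zpow_negSucc, Prod.snd_inv, snd_pow]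

lemma vA_zpow_add (α β : ℤ) : vA P D ^ (α + β) = vA P D ^ α * vA P D ^ β := by
  have h1 : (vA P D).1 ≠ 0 := by rw [vA_fst]; exact Xpow_ne D
  have h2 : (vA P D).2 ≠ 0 := by
    rw [vA_snd]
    rcases neg_one_pow_cases P with h | h <;> rw [h] <;>
      simp only [one_mul, neg_mul, neg_ne_zero] <;> exact Xpow_ne D
  ext
  · rw [Prod.fst_mul, fst_zpow, fst_zpow, fst_zpow, zpow_add₀ h1]
  · rw [Prod.snd_mul, snd_zpow, snd_zpow, snd_zpow, zpow_add₀ h2]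

lemma zpow_neg_nat (x : Aq) (c : ℕ) : x ^ (-(c : ℤ)) = (x ^ c)⁻¹ := by
  rw [zpow_neg, zpow_natCast]

variable {I : Type} (p d : I → ℕ) {U : Type} [Ring U] [Algebra Aq U] (e : I → U) (i : I)

lemma qinti_eq (m : ℕ) : qinti p d i m = sInt (p i) (d i) m := by
  rw [qinti, sInt, sNum, sDen, zpow_neg, zpow_natCast]
  rfl

lemma qfacti_eq (m : ℕ) : qfacti p d i m = sFact (p i) (d i) m := by
  unfold qfacti sFact
  exact Finset.prod_congr rfl (fun s _ => qinti_eq p d i (s + 1))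

lemma pivqi_eq : pi' p i * qi d i = vA (p i) (d i) := rfl

lemma edp_zero : edp p d e i 0 = 1 := by
  rw [edp, pow_zero, qfacti, Finset.range_zero, Finset.prod_empty, inv_one, one_smul]

lemma edp_one (hD : 0 < d i) : edp p d e i 1 = e i := by
  rw [edp, pow_one, qfacti_eq, show sFact (p i) (d i) 1 = 1 by
    rw [sFact_succ, sFact_zero, one_mul, sInt_one _ _ hD], inv_one, one_smul]

lemma sFact_inv_mul (hD : 0 < D) (s r : ℕ) :
    (sFact P D s)⁻¹ * (sFact P D r)⁻¹ = sBc P D s r * (sFact P D (s + r))⁻¹ := by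
  have hs := isUnit_sFact P D hD s
  have hr := isUnit_sFact P D hD r
  have hsr := isUnit_sFact P D hD (s + r)
  apply unit_cancel ((hs.mul hr).mul hsr)
  calc sFact P D s * sFact P D r * sFact P D (s + r) * ((sFact P D s)⁻¹ * (sFact P D r)⁻¹)
      = (sFact P D s * (sFact P D s)⁻¹) * (sFact P D r * (sFact P D r)⁻¹) * sFact P D (s + r) := by
        ring
    _ = sFact P D (s + r) := by rw [hs.mul_inv_cancel, hr.mul_inv_cancel, one_mul, one_mul]
    _ = (sFact P D (s + r) * (sFact P D (s + r))⁻¹) * sFact P D (s + r) := by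
        rw [hsr.mul_inv_cancel, one_mul]
    _ = (sFact P D (s + r) * (sFact P D (s + r))⁻¹) * (sFact P D s * sFact P D r * sBc P D s r) := by
        rw [sBc_spec]
    _ = sFact P D s * sFact P D r * sFact P D (s + r) * (sBc P D s r * (sFact P D (s + r))⁻¹) := by
        ring

lemma edp_merge (hD : 0 < d i) (s r : ℕ) :
    edp p d e i s * edp p d e i r = sBc (p i) (d i) s r • edp p d e i (s + r) := by
  rw [edp, edp, edp, smul_mul_assoc, mul_smul_comm, ← pow_add, smul_smul, smul_smul,
    qfacti_eq, qfacti_eq, qfacti_eq, sFact_inv_mul _ _ hD]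

lemma edp_mul_e (hD : 0 < d i) (r : ℕ) :
    edp p d e i r * edp p d e i 1 = sInt (p i) (d i) (r + 1) • edp p d e i (r + 1) := by
  rw [edp_merge p d e i hD, sBc_comm _ _ hD, sBc_one_left _ _ hD]

lemma e_mul_edp (hD : 0 < d i) (r : ℕ) :
    edp p d e i 1 * edp p d e i r = sInt (p i) (d i) (r + 1) • edp p d e i (1 + r) := by
  rw [edp_merge p d e i hD, sBc_one_left _ _ hD]

end HS

namespace HS

variable {M : Type} [AddCommMonoid M]

lemma tri (N : ℕ) (F : ℕ → ℕ → M) :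
    ∑ k ∈ range (N + 1), ∑ r ∈ range (k + 1), F k r =
      ∑ x ∈ range (N + 1), ∑ s ∈ range (N - x + 1), F (x + s) x := by
  induction N with
  | zero => simp
  | succ N ih =>
    rw [Finset.sum_range_succ, ih]
    have hr : ∀ x ∈ range (N + 1 + 1), ∑ s ∈ range (N + 1 - x + 1), F (x + s) x =
        (if x ≤ N then ∑ s ∈ range (N - x + 1), F (x + s) x else 0) + F (N + 1) x := by
      intro x hx
      rw [mem_range] at hx
      by_cases h : x ≤ N
      · rw [if_pos h, show N + 1 - x + 1 = (N - x + 1) + 1 by omega, Finset.sum_range_succ,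
          show x + (N - x + 1) = N + 1 by omega]
      · have : x = N + 1 := by omega
        subst this
        rw [if_neg h, show N + 1 - (N + 1) + 1 = 1 by omega]
        simp
    rw [Finset.sum_congr rfl hr, Finset.sum_add_distrib, Finset.sum_range_succ
      (fun x => if x ≤ N then ∑ s ∈ range (N - x + 1), F (x + s) x else 0),
      if_neg (by omega)]
    rw [Finset.sum_congr rfl (fun x hx => if_pos (by rw [mem_range] at hx; omega))]
    ring_nf
    rw [add_zero]

lemma tri2 (R : ℕ) (G : ℕ → ℕ → M) :
    ∑ s ∈ range (R + 1), ∑ r ∈ range (R - s + 1), G s r =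
      ∑ β ∈ range (R + 1), ∑ s ∈ range (β + 1), G s (β - s) := by
  induction R with
  | zero => simp
  | succ R ih =>
    have hl : ∀ s ∈ range (R + 1), ∑ r ∈ range (R + 1 - s + 1), G s r =
        ∑ r ∈ range (R - s + 1), G s r + G s (R + 1 - s) := by
      intro s hs
      rw [mem_range] at hs
      rw [show R + 1 - s + 1 = (R - s + 1) + 1 by omega, Finset.sum_range_succ,
        show R - s + 1 = R + 1 - s by omega]
    rw [Finset.sum_range_succ (fun s => ∑ r ∈ range (R + 1 - s + 1), G s r),
      show R + 1 - (R + 1) + 1 = 1 by omega, Finset.sum_range_one,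
      Finset.sum_congr rfl hl, Finset.sum_add_distrib, ih,
      Finset.sum_range_succ (fun β => ∑ s ∈ range (β + 1), G s (β - s)) (R + 1)]
    rw [add_assoc]
    congr 1
    rw [Finset.sum_range_succ (fun s => G s (R + 1 - s)) (R + 1),
      show R + 1 - (R + 1) = 0 by omega]

end HS

namespace HS

variable {I : Type} (p d : I → ℕ) {U : Type} [Ring U] [Algebra Aq U] (e : I → U) (i j : I)

/-- the coefficient of the higher Serre element -/
def cE (p d : I → ℕ) (i j : I) (a : ℤ) (n m r : ℕ) : Aq :=
  (-1) ^ r * pA ^ (p i * (n * r * p j + r.choose 2)) *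
    (pi' p i * qi d i) ^ (-(r : ℤ) * ((n : ℤ) * a + (m : ℤ) - 1))

/-- the higher Serre element `e_{i,j;n,m}` -/
def EeD (p d : I → ℕ) {U : Type} [Ring U] [Algebra Aq U] (e : I → U) (i j : I)
    (a : ℤ) (n m : ℕ) : U :=
  ∑ rr ∈ range (m + 1),
    cE p d i j a n m rr • (edp p d e i rr * edp p d e j n * edp p d e i (m - rr))

lemma cE_def' (a : ℤ) (n m r : ℕ) :
    cE p d i j a n m r = (-1 : Aq) ^ r * pA ^ (p i * (n * r * p j + r.choose 2)) *
      vA (p i) (d i) ^ (-(r : ℤ) * ((n : ℤ) * a + (m : ℤ) - 1)) := rfl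

lemma cE_zero (a : ℤ) (n m : ℕ) : cE p d i j a n m 0 = 1 := by
  simp [cE]

/-- the `n = 0` case -/
lemma L0 (hD : 0 < d i) (a : ℤ) (m : ℕ) (hm : 1 ≤ m) : EeD p d e i j a 0 m = 0 := by
  unfold EeD
  have step : ∀ r ∈ range (m + 1),
      cE p d i j a 0 m r • (edp p d e i r * edp p d e j 0 * edp p d e i (m - r)) =
      ((-1 : Aq) ^ r * piP (p i) ^ r.choose 2 * (vA (p i) (d i) ^ (r * (m - 1)))⁻¹ *
        sBc (p i) (d i) r (m - r)) • edp p d e i m := by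
    intro r hr
    rw [mem_range] at hr
    rw [edp_zero, mul_one, edp_merge p d e i hD, show r + (m - r) = m by omega, smul_smul]
    congr 1
    rw [cE_def']
    simp only [Nat.cast_zero]
    have hz : (-(r : ℤ) * ((0 : ℤ) * a + (m : ℤ) - 1)) = -((r * (m - 1) : ℕ) : ℤ) := by
      push_cast [Nat.cast_sub hm]
      ring
    rw [hz, zpow_neg_nat]
    have hp : p i * (0 * r * p j + r.choose 2) = p i * r.choose 2 := by ring_nf
    rw [hp, pow_mul]
    rfl
  rw [Finset.sum_congr rfl step, ← Finset.sum_smul]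
  have hS := SG (p i) (d i) hD (m - 1)
  rw [show m - 1 + 2 = m + 1 by omega] at hS
  have : ∑ r ∈ range (m + 1), (-1 : Aq) ^ r * piP (p i) ^ r.choose 2 *
      (vA (p i) (d i) ^ (r * (m - 1)))⁻¹ * sBc (p i) (d i) r (m - r) = 0 := by
    rw [← hS]
    exact Finset.sum_congr rfl (fun t ht => by
      rw [mem_range] at ht
      rw [show m - 1 + 1 - t = m - t by omega])
  rw [this, zero_smul]

end HS

namespace HS

lemma pA_sq : pA ^ 2 = 1 := by rw [pow_two, pA_mul_pA]

lemma pA_pow_add_two_mul (B k : ℕ) : pA ^ (B + 2 * k) = pA ^ B := by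
  rw [pow_add, pow_mul, pA_sq, one_pow, mul_one]

lemma neg_one_pow_add_two_mul (B k : ℕ) : (-1 : Aq) ^ (B + 2 * k) = (-1 : Aq) ^ B := by
  rw [pow_add, pow_mul, neg_one_sq, one_pow, mul_one]

lemma choose2_add (r t : ℕ) : (r + t).choose 2 = r.choose 2 + t.choose 2 + r * t := by
  induction t with
  | zero => simp
  | succ t ih =>
    rw [show r + (t + 1) = (r + t) + 1 by omega, choose2_succ, ih, choose2_succ]
    ring

variable {I : Type} (p d : I → ℕ) {U : Type} [Ring U] [Algebra Aq U] (e : I → U) (i j : I)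

lemma LSerre (hD : 0 < d i) (hDj : 0 < d j) (hple : p i ≤ 1) (a : ℤ) (ha : a ≤ 0)
    (hpar : p i = 1 → Even a)
    (hS : ∑ n' ∈ range ((1 - a).toNat + 1),
        ((-1) ^ n' * pA ^ (p i * (n' * p j + n'.choose 2))) •
          (edp p d e i ((1 - a).toNat - n') * e j * edp p d e i n') = 0) :
    EeD p d e i j a 1 ((1 - a).toNat) = 0 := by
  set N := (1 - a).toNat with hNdef
  have hNa : (N : ℤ) = 1 - a := Int.toNat_of_nonneg (by omega)
  rw [← Finset.sum_range_reflect] at hS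
  have key : EeD p d e i j a 1 N =
      ((-1 : Aq) ^ N * pA ^ (p i * (N * p j + N.choose 2))) •
        ∑ n' ∈ range (N + 1),
          ((-1) ^ (N + 1 - 1 - n') *
              pA ^ (p i * ((N + 1 - 1 - n') * p j + (N + 1 - 1 - n').choose 2))) •
            (edp p d e i (N - (N + 1 - 1 - n')) * e j * edp p d e i (N + 1 - 1 - n')) := by
    rw [Finset.smul_sum]
    unfold EeD
    apply Finset.sum_congr rfl
    intro r hr
    rw [mem_range] at hr
    rw [show N + 1 - 1 - r = N - r by omega, show N - (N - r) = r by omega,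
      edp_one p d e j hDj, smul_smul]
    congr 1
    rw [cE_def']
    simp only [Nat.cast_one]
    have hz0 : -(r : ℤ) * (1 * a + (N : ℤ) - 1) = 0 := by rw [hNa]; ring
    rw [hz0, zpow_zero, mul_one]
    obtain ⟨t, ht⟩ : ∃ t, N = r + t := ⟨N - r, by omega⟩
    rw [ht, show r + t - r = t by omega]
    have hsign : (-1 : Aq) ^ (r + t) * (-1 : Aq) ^ t = (-1 : Aq) ^ r := by
      rw [← pow_add, show r + t + t = r + 2 * t by ring, neg_one_pow_add_two_mul]
    have hexp : ∃ w, p i * ((r + t) * p j + (r + t).choose 2) + p i * (t * p j + t.choose 2) =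
        p i * (1 * r * p j + r.choose 2) + 2 * w := by
      by_cases hpi : p i = 1
      · have hEa := hpar hpi
        obtain ⟨c, hc⟩ := hEa
        have hN2 : (r + t) % 2 = 1 := by
          have : N = r + t := ht
          omega
        have hrt : ∃ z, r * t = 2 * z := by
          rcases Nat.mod_two_eq_zero_or_one r with h | h
          · obtain ⟨u, hu⟩ : ∃ u, r = 2 * u := ⟨r / 2, by omega⟩
            exact ⟨u * t, by rw [hu]; ring⟩
          · have h2 : t % 2 = 0 := by omega
            obtain ⟨u, hu⟩ : ∃ u, t = 2 * u := ⟨t / 2, by omega⟩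
            exact ⟨r * u, by rw [hu]; ring⟩
        obtain ⟨z, hz⟩ := hrt
        refine ⟨t * p j + t.choose 2 + z, ?_⟩
        rw [hpi, choose2_add, hz]
        ring
      · have hpi0 : p i = 0 := by omega
        exact ⟨0, by rw [hpi0]; ring⟩
    obtain ⟨w, hw⟩ := hexp
    have hpA : pA ^ (p i * ((r + t) * p j + (r + t).choose 2)) *
        pA ^ (p i * (t * p j + t.choose 2)) = pA ^ (p i * (1 * r * p j + r.choose 2)) := by
      rw [← pow_add, hw, pA_pow_add_two_mul]
    calc (-1 : Aq) ^ r * pA ^ (p i * (1 * r * p j + r.choose 2))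
        = ((-1 : Aq) ^ (r + t) * (-1 : Aq) ^ t) *
          (pA ^ (p i * ((r + t) * p j + (r + t).choose 2)) *
            pA ^ (p i * (t * p j + t.choose 2))) := by rw [hsign, hpA]
      _ = (-1 : Aq) ^ (r + t) * pA ^ (p i * ((r + t) * p j + (r + t).choose 2)) *
          ((-1 : Aq) ^ t * pA ^ (p i * (t * p j + t.choose 2))) := by ring
  rw [key, hS, smul_zero]

end HS

namespace HS

lemma smul_cancel {U : Type} [Ring U] [Algebra Aq U] {c : Aq} (hc : IsUnit c) {x : U}
    (h : c • x = 0) : x = 0 := by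
  have h2 := congrArg (fun y => c⁻¹ • y) h
  simpa [smul_smul, hc.inv_mul_cancel] using h2

variable {I : Type} (p d : I → ℕ) {U : Type} [Ring U] [Algebra Aq U] (e : I → U) (i j : I)

lemma LR1_claim1 (a : ℤ) (m r : ℕ) :
    vA (p i) (d i) ^ (r + 1) * cE p d i j a 1 (m + 1) (r + 1) = cE p d i j a 1 m (r + 1) := by
  rw [cE_def', cE_def']
  rw [show vA (p i) (d i) ^ (r + 1) *
      ((-1 : Aq) ^ (r + 1) * pA ^ (p i * (1 * (r + 1) * p j + (r + 1).choose 2)) *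
        vA (p i) (d i) ^ (-((r + 1 : ℕ) : ℤ) * ((1 : ℕ) * a + ((m + 1 : ℕ) : ℤ) - 1))) =
      (-1 : Aq) ^ (r + 1) * pA ^ (p i * (1 * (r + 1) * p j + (r + 1).choose 2)) *
        (vA (p i) (d i) ^ (((r + 1 : ℕ) : ℤ)) *
          vA (p i) (d i) ^ (-((r + 1 : ℕ) : ℤ) * ((1 : ℕ) * a + ((m + 1 : ℕ) : ℤ) - 1))) by
    rw [zpow_natCast]; ring]
  rw [← vA_zpow_add]
  congr 2
  push_cast
  ring

lemma LR1_claim2 (a : ℤ) (m r : ℕ) (hr : r ≤ m) :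
    (uA (d i) ^ (m - r))⁻¹ * cE p d i j a 1 (m + 1) (r + 1) =
      -((pA ^ (p i * (m + p j)) * vA (p i) (d i) ^ (-(a + 2 * (m : ℤ)))) *
        cE p d i j a 1 m r) := by
  rw [uA_pow_inv, cE_def', cE_def']
  rw [show piP (p i) ^ (m - r) = pA ^ (p i * (m - r)) by rw [piP, ← pow_mul]]
  rw [show (vA (p i) (d i) ^ (m - r))⁻¹ = vA (p i) (d i) ^ (-((m - r : ℕ) : ℤ)) from
    (zpow_neg_nat _ _).symm]
  have hpow : pA ^ (p i * (m - r)) * pA ^ (p i * (1 * (r + 1) * p j + (r + 1).choose 2)) =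
      pA ^ (p i * (m + p j)) * pA ^ (p i * (1 * r * p j + r.choose 2)) := by
    rw [← pow_add, ← pow_add]
    congr 1
    obtain ⟨c, hc⟩ : ∃ c, m = r + c := ⟨m - r, by omega⟩
    rw [hc, show r + c - r = c by omega, choose2_succ]
    ring
  have hv : vA (p i) (d i) ^ (-((m - r : ℕ) : ℤ)) *
        vA (p i) (d i) ^ (-((r + 1 : ℕ) : ℤ) * ((1 : ℕ) * a + ((m + 1 : ℕ) : ℤ) - 1)) =
      vA (p i) (d i) ^ (-(a + 2 * (m : ℤ))) *
        vA (p i) (d i) ^ (-((r : ℕ) : ℤ) * ((1 : ℕ) * a + ((m : ℕ) : ℤ) - 1)) := by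
    rw [← vA_zpow_add, ← vA_zpow_add]
    congr 1
    push_cast [Nat.cast_sub hr]
    ring
  set a1 := pA ^ (p i * (m - r))
  set b1 := pA ^ (p i * (1 * (r + 1) * p j + (r + 1).choose 2))
  set a2 := pA ^ (p i * (m + p j))
  set b2 := pA ^ (p i * (1 * r * p j + r.choose 2))
  set v1 := vA (p i) (d i) ^ (-((m - r : ℕ) : ℤ))
  set w1 := vA (p i) (d i) ^ (-((r + 1 : ℕ) : ℤ) * ((1 : ℕ) * a + ((m + 1 : ℕ) : ℤ) - 1))
  set v2 := vA (p i) (d i) ^ (-(a + 2 * (m : ℤ)))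
  set w2 := vA (p i) (d i) ^ (-((r : ℕ) : ℤ) * ((1 : ℕ) * a + ((m : ℕ) : ℤ) - 1))
  rw [pow_succ (-1 : Aq) r]
  linear_combination (-(-1 : Aq) ^ r * (v1 * w1)) * hpow + (-(-1 : Aq) ^ r * (a2 * b2)) * hv

lemma LR1_idB (hD : 0 < d i) (a : ℤ) (m r : ℕ) (hr : r ≤ m) :
    sInt (p i) (d i) (m + 1) * cE p d i j a 1 (m + 1) (r + 1) +
      (pA ^ (p i * (m + p j)) * vA (p i) (d i) ^ (-(a + 2 * (m : ℤ)))) *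
        (cE p d i j a 1 m r * sInt (p i) (d i) (r + 1)) =
    cE p d i j a 1 m (r + 1) * sInt (p i) (d i) (m + 1 - (r + 1)) := by
  rw [show m + 1 - (r + 1) = m - r by omega]
  have hSI := SI1 (p i) (d i) (m - r) (r + 1)
  rw [show m - r + (r + 1) = m + 1 by omega] at hSI
  rw [hSI]
  have h1 := LR1_claim1 p d i j a m r
  have h2 := LR1_claim2 p d i j a m r hr
  linear_combination (sInt (p i) (d i) (m - r)) * h1 +
    (sInt (p i) (d i) (r + 1)) * h2

lemma LR1_key (hD : 0 < d i) (hDj : 0 < d j) (a : ℤ) (m : ℕ) :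
    sInt (p i) (d i) (m + 1) • EeD p d e i j a 1 (m + 1) =
      EeD p d e i j a 1 m * edp p d e i 1 -
        (pA ^ (p i * (m + p j)) * vA (p i) (d i) ^ (-(a + 2 * (m : ℤ)))) •
          (edp p d e i 1 * EeD p d e i j a 1 m) := by
  have hB : EeD p d e i j a 1 m * edp p d e i 1 =
      ∑ r ∈ range (m + 1 + 1), (cE p d i j a 1 m r * sInt (p i) (d i) (m + 1 - r)) •
        (edp p d e i r * edp p d e j 1 * edp p d e i (m + 1 - r)) := by
    rw [Finset.sum_range_succ, show m + 1 - (m + 1) = 0 by omega, sInt_zero, mul_zero,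
      zero_smul, add_zero]
    unfold EeD
    rw [Finset.sum_mul]
    apply Finset.sum_congr rfl
    intro r hr
    rw [mem_range] at hr
    rw [smul_mul_assoc, mul_assoc, edp_mul_e p d e i hD,
      show m - r + 1 = m + 1 - r by omega, mul_smul_comm, smul_smul]
  have hA : edp p d e i 1 * EeD p d e i j a 1 m =
      ∑ r ∈ range (m + 1), (cE p d i j a 1 m r * sInt (p i) (d i) (r + 1)) •
        (edp p d e i (r + 1) * edp p d e j 1 * edp p d e i (m + 1 - (r + 1))) := by
    unfold EeD
    rw [Finset.mul_sum]
    apply Finset.sum_congr rfl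
    intro r hr
    rw [mem_range] at hr
    rw [mul_smul_comm, ← mul_assoc, ← mul_assoc, e_mul_edp p d e i hD,
      show 1 + r = r + 1 by omega, show m - r = m + 1 - (r + 1) by omega,
      smul_mul_assoc, smul_mul_assoc, smul_smul]
  have hL : sInt (p i) (d i) (m + 1) • EeD p d e i j a 1 (m + 1) =
      ∑ r ∈ range (m + 1 + 1), (sInt (p i) (d i) (m + 1) * cE p d i j a 1 (m + 1) r) •
        (edp p d e i r * edp p d e j 1 * edp p d e i (m + 1 - r)) := by
    unfold EeD
    rw [Finset.smul_sum]
    exact Finset.sum_congr rfl (fun r _ => smul_smul _ _ _)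
  rw [hL, hB, hA, eq_sub_iff_add_eq, Finset.smul_sum]
  rw [Finset.sum_range_succ' (fun r => (sInt (p i) (d i) (m + 1) * cE p d i j a 1 (m + 1) r) •
      (edp p d e i r * edp p d e j 1 * edp p d e i (m + 1 - r))) (m + 1)]
  rw [Finset.sum_range_succ' (fun r => (cE p d i j a 1 m r * sInt (p i) (d i) (m + 1 - r)) •
      (edp p d e i r * edp p d e j 1 * edp p d e i (m + 1 - r))) (m + 1)]
  have h0t : (sInt (p i) (d i) (m + 1) * cE p d i j a 1 (m + 1) 0) •
      (edp p d e i 0 * edp p d e j 1 * edp p d e i (m + 1 - 0)) =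
      (cE p d i j a 1 m 0 * sInt (p i) (d i) (m + 1 - 0)) •
        (edp p d e i 0 * edp p d e j 1 * edp p d e i (m + 1 - 0)) := by
    rw [cE_zero, cE_zero, mul_one, one_mul, Nat.sub_zero]
  rw [add_right_comm, h0t]
  congr 1
  rw [← Finset.sum_add_distrib]
  apply Finset.sum_congr rfl
  intro r hr
  rw [mem_range] at hr
  rw [smul_smul, ← add_smul, LR1_idB p d i j hD a m r (by omega)]

lemma LR1 (hD : 0 < d i) (hDj : 0 < d j) (a : ℤ) (ha : a ≤ 0) (m : ℕ)
    (hm : (1 : ℤ) - a ≤ m) (h0 : EeD p d e i j a 1 m = 0) :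
    EeD p d e i j a 1 (m + 1) = 0 := by
  have hk := LR1_key p d e i j hD hDj a m
  rw [h0, zero_mul, mul_zero, smul_zero, sub_zero] at hk
  exact smul_cancel (isUnit_sInt (p i) (d i) hD (Nat.succ_pos m)) hk

end HS

namespace HS

variable {I : Type} (p d : I → ℕ) {U : Type} [Ring U] [Algebra Aq U] (e : I → U) (i j : I)

/-- normal-form monomial `θ_i^{(x)} θ_j θ_i^{(b)} θ_j^{(n)} θ_i^{(z)}` -/
def NN (p d : I → ℕ) {U : Type} [Ring U] [Algebra Aq U] (e : I → U) (i j : I)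
    (n x b z : ℕ) : U :=
  edp p d e i x * (edp p d e j 1 * (edp p d e i b * (edp p d e j n * edp p d e i z)))

lemma LStar_term (hD : 0 < d i) (a : ℤ) (n m k : ℕ) :
    (pA ^ (p i * (n * k * p j)) *
        vA (p i) (d i) ^ (-(k : ℤ) * ((n : ℤ) * a + (m : ℤ) - (k : ℤ)))) •
      (EeD p d e i j a 1 k * EeD p d e i j a n (m - k)) =
    ∑ r1 ∈ range (k + 1), ∑ r2 ∈ range (m - k + 1),
      (pA ^ (p i * (n * k * p j)) *
          vA (p i) (d i) ^ (-(k : ℤ) * ((n : ℤ) * a + (m : ℤ) - (k : ℤ))) *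
        (cE p d i j a 1 k r1 * cE p d i j a n (m - k) r2) *
        sBc (p i) (d i) (k - r1) r2) •
      NN p d e i j n r1 ((k - r1) + r2) ((m - k) - r2) := by
  unfold EeD
  rw [Finset.sum_mul_sum, Finset.smul_sum]
  apply Finset.sum_congr rfl
  intro r1 h1
  rw [Finset.smul_sum]
  apply Finset.sum_congr rfl
  intro r2 h2
  rw [smul_mul_smul_comm, smul_smul]
  have hmul : edp p d e i r1 * edp p d e j 1 * edp p d e i (k - r1) *
      (edp p d e i r2 * edp p d e j n * edp p d e i (m - k - r2)) =
      sBc (p i) (d i) (k - r1) r2 • NN p d e i j n r1 ((k - r1) + r2) ((m - k) - r2) := by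
    unfold NN
    simp only [mul_assoc]
    rw [← mul_assoc (edp p d e i (k - r1)) (edp p d e i r2),
      edp_merge p d e i hD (k - r1) r2, smul_mul_assoc, mul_smul_comm, mul_smul_comm]
  rw [hmul, smul_smul]

/-- vanishing of the cross terms (`β = b+1 ≥ 1`) -/
lemma LStar_beta (hD : 0 < d i) (a : ℤ) (n m x b : ℕ) (hxb : x + (b + 1) ≤ m) :
    ∑ s ∈ range (b + 2),
      pA ^ (p i * (n * (x + s) * p j)) *
          vA (p i) (d i) ^ (-((x + s : ℕ) : ℤ) * ((n : ℤ) * a + (m : ℤ) - ((x + s : ℕ) : ℤ))) *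
        (cE p d i j a 1 (x + s) x * cE p d i j a n (m - x - s) (b + 1 - s)) *
        sBc (p i) (d i) s (b + 1 - s) = 0 := by
  have key : ∀ s ∈ range (b + 2),
      pA ^ (p i * (n * (x + s) * p j)) *
          vA (p i) (d i) ^ (-((x + s : ℕ) : ℤ) * ((n : ℤ) * a + (m : ℤ) - ((x + s : ℕ) : ℤ))) *
        (cE p d i j a 1 (x + s) x * cE p d i j a n (m - x - s) (b + 1 - s)) *
        sBc (p i) (d i) s (b + 1 - s) =
      ((-1 : Aq) ^ x * pA ^ (p i * (n * (x + (b + 1)) * p j + x * p j + x.choose 2)) *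
          vA (p i) (d i) ^ (-(x : ℤ) * ((n : ℤ) * a + (m : ℤ) - (x : ℤ)) -
            (x : ℤ) * (a + (x : ℤ) - 1) -
            ((b : ℤ) + 1) * ((n : ℤ) * a + (m : ℤ) - (x : ℤ) - 1))) *
        ((-1 : Aq) ^ (b + 1 - s) * piP (p i) ^ (b + 1 - s).choose 2 *
          vA (p i) (d i) ^ (s * b) * sBc (p i) (d i) s (b + 1 - s)) := by
    intro s hs
    rw [mem_range] at hs
    rw [cE_def', cE_def']
    have hpa : pA ^ (p i * (n * (x + s) * p j)) *
        (pA ^ (p i * (1 * x * p j + x.choose 2)) *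
          pA ^ (p i * (n * (b + 1 - s) * p j + (b + 1 - s).choose 2))) =
        pA ^ (p i * (n * (x + (b + 1)) * p j + x * p j + x.choose 2)) *
          piP (p i) ^ (b + 1 - s).choose 2 := by
      rw [piP, ← pow_mul, ← pow_add, ← pow_add]
      congr 1
      obtain ⟨c, hc⟩ : ∃ c, b + 1 = s + c := ⟨b + 1 - s, by omega⟩
      rw [hc, show s + c - s = c by omega]
      ring
    have hva : vA (p i) (d i) ^ (-((x + s : ℕ) : ℤ) * ((n : ℤ) * a + (m : ℤ) - ((x + s : ℕ) : ℤ))) *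
        (vA (p i) (d i) ^ (-(x : ℤ) * (((1 : ℕ) : ℤ) * a + ((x + s : ℕ) : ℤ) - 1)) *
          vA (p i) (d i) ^ (-((b + 1 - s : ℕ) : ℤ) * ((n : ℤ) * a + ((m - x - s : ℕ) : ℤ) - 1))) =
        vA (p i) (d i) ^ (-(x : ℤ) * ((n : ℤ) * a + (m : ℤ) - (x : ℤ)) -
            (x : ℤ) * (a + (x : ℤ) - 1) -
            ((b : ℤ) + 1) * ((n : ℤ) * a + (m : ℤ) - (x : ℤ) - 1)) *
          vA (p i) (d i) ^ (((s * b : ℕ) : ℤ)) := by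
      rw [← vA_zpow_add, ← vA_zpow_add, ← vA_zpow_add]
      congr 1
      have e1 : ((b + 1 - s : ℕ) : ℤ) = (b : ℤ) + 1 - (s : ℤ) := by omega
      have e2 : ((m - x - s : ℕ) : ℤ) = (m : ℤ) - (x : ℤ) - (s : ℤ) := by omega
      rw [e1, e2]
      push_cast
      ring
    set A := pA ^ (p i * (n * (x + s) * p j)) with hA
    set B := pA ^ (p i * (1 * x * p j + x.choose 2)) with hB
    set C := pA ^ (p i * (n * (b + 1 - s) * p j + (b + 1 - s).choose 2)) with hC
    set P := pA ^ (p i * (n * (x + (b + 1)) * p j + x * p j + x.choose 2)) with hP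
    set Q := piP (p i) ^ (b + 1 - s).choose 2 with hQ
    set V := vA (p i) (d i) ^
      (-((x + s : ℕ) : ℤ) * ((n : ℤ) * a + (m : ℤ) - ((x + s : ℕ) : ℤ))) with hV
    set W := vA (p i) (d i) ^ (-(x : ℤ) * (((1 : ℕ) : ℤ) * a + ((x + s : ℕ) : ℤ) - 1)) with hW
    set Z := vA (p i) (d i) ^
      (-((b + 1 - s : ℕ) : ℤ) * ((n : ℤ) * a + ((m - x - s : ℕ) : ℤ) - 1)) with hZ
    set E := vA (p i) (d i) ^ (-(x : ℤ) * ((n : ℤ) * a + (m : ℤ) - (x : ℤ)) -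
      (x : ℤ) * (a + (x : ℤ) - 1) -
      ((b : ℤ) + 1) * ((n : ℤ) * a + (m : ℤ) - (x : ℤ) - 1)) with hE
    set Vs := vA (p i) (d i) ^ (s * b) with hVs
    have hVs' : vA (p i) (d i) ^ (((s * b : ℕ) : ℤ)) = Vs := by
      rw [hVs, zpow_natCast]
    rw [hVs'] at hva
    set S := sBc (p i) (d i) s (b + 1 - s) with hS
    linear_combination (((-1 : Aq) ^ x * (-1 : Aq) ^ (b + 1 - s)) * S * (V * (W * Z))) * hpa +
      (((-1 : Aq) ^ x * (-1 : Aq) ^ (b + 1 - s)) * S * (P * Q)) * hva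
  rw [Finset.sum_congr rfl key, ← Finset.mul_sum, SGr (p i) (d i) hD b, mul_zero]

/-- the diagonal (`β = 0`) coefficient -/
lemma LStar_b0 (a : ℤ) (n m x : ℕ) :
    pA ^ (p i * (n * x * p j)) *
        vA (p i) (d i) ^ (-(x : ℤ) * ((n : ℤ) * a + (m : ℤ) - (x : ℤ))) *
      cE p d i j a 1 x x = cE p d i j a (n + 1) m x := by
  rw [cE_def', cE_def']
  have hpa : pA ^ (p i * (n * x * p j)) * pA ^ (p i * (1 * x * p j + x.choose 2)) =
      pA ^ (p i * ((n + 1) * x * p j + x.choose 2)) := by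
    rw [← pow_add]
    congr 1
    ring
  have hva : vA (p i) (d i) ^ (-(x : ℤ) * ((n : ℤ) * a + (m : ℤ) - (x : ℤ))) *
      vA (p i) (d i) ^ (-(x : ℤ) * (((1 : ℕ) : ℤ) * a + ((x : ℕ) : ℤ) - 1)) =
      vA (p i) (d i) ^ (-(x : ℤ) * (((n + 1 : ℕ) : ℤ) * a + (m : ℤ) - 1)) := by
    rw [← vA_zpow_add]
    congr 1
    push_cast
    ring
  set A := pA ^ (p i * (n * x * p j)) with hA
  set B := pA ^ (p i * (1 * x * p j + x.choose 2)) with hB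
  set Pn := pA ^ (p i * ((n + 1) * x * p j + x.choose 2)) with hPn
  set V := vA (p i) (d i) ^ (-(x : ℤ) * ((n : ℤ) * a + (m : ℤ) - (x : ℤ))) with hV
  set W := vA (p i) (d i) ^ (-(x : ℤ) * (((1 : ℕ) : ℤ) * a + ((x : ℕ) : ℤ) - 1)) with hW
  set Z := vA (p i) (d i) ^ (-(x : ℤ) * (((n + 1 : ℕ) : ℤ) * a + (m : ℤ) - 1)) with hZ
  linear_combination ((-1 : Aq) ^ x * (V * W)) * hpa + ((-1 : Aq) ^ x * Pn) * hva

end HS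

namespace HS

variable {I : Type} (p d : I → ℕ) {U : Type} [Ring U] [Algebra Aq U] (e : I → U) (i j : I)

lemma LStar_x (hD : 0 < d i) (hDj : 0 < d j) (a : ℤ) (n m x : ℕ) (hx : x ≤ m) :
    ∑ s ∈ range (m - x + 1), ∑ r2 ∈ range (m - (x + s) + 1),
      (pA ^ (p i * (n * (x + s) * p j)) *
          vA (p i) (d i) ^ (-((x + s : ℕ) : ℤ) * ((n : ℤ) * a + (m : ℤ) - ((x + s : ℕ) : ℤ))) *
        (cE p d i j a 1 (x + s) x * cE p d i j a n (m - (x + s)) r2) *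
        sBc (p i) (d i) ((x + s) - x) r2) •
      NN p d e i j n x (((x + s) - x) + r2) ((m - (x + s)) - r2) =
    (sInt (p j) (d j) (n + 1) * cE p d i j a (n + 1) m x) •
      (edp p d e i x * edp p d e j (n + 1) * edp p d e i (m - x)) := by
  have hA : ∀ s ∈ range (m - x + 1), (∑ r2 ∈ range (m - (x + s) + 1),
      (pA ^ (p i * (n * (x + s) * p j)) *
          vA (p i) (d i) ^ (-((x + s : ℕ) : ℤ) * ((n : ℤ) * a + (m : ℤ) - ((x + s : ℕ) : ℤ))) *
        (cE p d i j a 1 (x + s) x * cE p d i j a n (m - (x + s)) r2) *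
        sBc (p i) (d i) ((x + s) - x) r2) •
      NN p d e i j n x (((x + s) - x) + r2) ((m - (x + s)) - r2)) =
      ∑ r2 ∈ range (m - x - s + 1),
      (pA ^ (p i * (n * (x + s) * p j)) *
          vA (p i) (d i) ^ (-((x + s : ℕ) : ℤ) * ((n : ℤ) * a + (m : ℤ) - ((x + s : ℕ) : ℤ))) *
        (cE p d i j a 1 (x + s) x * cE p d i j a n (m - x - s) r2) *
        sBc (p i) (d i) s r2) •
      NN p d e i j n x (s + r2) ((m - x - s) - r2) := by
    intro s hs
    rw [show (x + s) - x = s by omega, show m - (x + s) = m - x - s by omega]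
  rw [Finset.sum_congr rfl hA, tri2 (m - x)]
  have hC : ∀ b ∈ range (m - x + 1), (∑ s ∈ range (b + 1),
      (pA ^ (p i * (n * (x + s) * p j)) *
          vA (p i) (d i) ^ (-((x + s : ℕ) : ℤ) * ((n : ℤ) * a + (m : ℤ) - ((x + s : ℕ) : ℤ))) *
        (cE p d i j a 1 (x + s) x * cE p d i j a n (m - x - s) (b - s)) *
        sBc (p i) (d i) s (b - s)) •
      NN p d e i j n x (s + (b - s)) ((m - x - s) - (b - s))) =
      (∑ s ∈ range (b + 1),
      pA ^ (p i * (n * (x + s) * p j)) *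
          vA (p i) (d i) ^ (-((x + s : ℕ) : ℤ) * ((n : ℤ) * a + (m : ℤ) - ((x + s : ℕ) : ℤ))) *
        (cE p d i j a 1 (x + s) x * cE p d i j a n (m - x - s) (b - s)) *
        sBc (p i) (d i) s (b - s)) •
      NN p d e i j n x b (m - x - b) := by
    intro b hb
    rw [mem_range] at hb
    rw [Finset.sum_smul]
    apply Finset.sum_congr rfl
    intro s hs
    rw [mem_range] at hs
    rw [show s + (b - s) = b by omega, show m - x - s - (b - s) = m - x - b by omega]
  rw [Finset.sum_congr rfl hC]
  rw [Finset.sum_range_succ' (fun b => (∑ s ∈ range (b + 1),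
      pA ^ (p i * (n * (x + s) * p j)) *
          vA (p i) (d i) ^ (-((x + s : ℕ) : ℤ) * ((n : ℤ) * a + (m : ℤ) - ((x + s : ℕ) : ℤ))) *
        (cE p d i j a 1 (x + s) x * cE p d i j a n (m - x - s) (b - s)) *
        sBc (p i) (d i) s (b - s)) •
      NN p d e i j n x b (m - x - b)) (m - x)]
  have hz : ∀ b ∈ range (m - x), (∑ s ∈ range (b + 1 + 1),
      pA ^ (p i * (n * (x + s) * p j)) *
          vA (p i) (d i) ^ (-((x + s : ℕ) : ℤ) * ((n : ℤ) * a + (m : ℤ) - ((x + s : ℕ) : ℤ))) *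
        (cE p d i j a 1 (x + s) x * cE p d i j a n (m - x - s) (b + 1 - s)) *
        sBc (p i) (d i) s (b + 1 - s)) •
      NN p d e i j n x (b + 1) (m - x - (b + 1)) = 0 := by
    intro b hb
    rw [mem_range] at hb
    rw [show b + 1 + 1 = b + 2 by omega, LStar_beta p d i j hD a n m x b (by omega), zero_smul]
  rw [Finset.sum_congr rfl hz, Finset.sum_const, smul_zero, zero_add]
  rw [Finset.sum_range_one]
  simp only [Nat.add_zero, Nat.sub_zero, Nat.sub_self]
  rw [cE_zero, mul_one, sBc_zero_left, mul_one, LStar_b0 p d i j a n m x]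
  unfold NN
  rw [edp_zero, one_mul, ← mul_assoc (edp p d e j 1) (edp p d e j n),
    e_mul_edp p d e j hDj n, show 1 + n = n + 1 from Nat.add_comm 1 n,
    smul_mul_assoc, mul_smul_comm, smul_smul, mul_comm (cE p d i j a (n + 1) m x),
    mul_assoc (edp p d e i x)]

lemma LStar (hD : 0 < d i) (hDj : 0 < d j) (a : ℤ) (n m : ℕ) :
    ∑ k ∈ range (m + 1),
      (pA ^ (p i * (n * k * p j)) *
          vA (p i) (d i) ^ (-(k : ℤ) * ((n : ℤ) * a + (m : ℤ) - (k : ℤ)))) •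
        (EeD p d e i j a 1 k * EeD p d e i j a n (m - k)) =
    sInt (p j) (d j) (n + 1) • EeD p d e i j a (n + 1) m := by
  rw [Finset.sum_congr rfl (fun k _ => LStar_term p d e i j hD a n m k), tri m]
  rw [Finset.sum_congr rfl (fun x hx =>
    LStar_x p d e i j hD hDj a n m x (by rw [mem_range] at hx; omega))]
  unfold EeD
  rw [Finset.smul_sum]
  exact Finset.sum_congr rfl (fun x _ => (smul_smul _ _ _).symm)

end HS

namespace HS

variable {I : Type} (p d : I → ℕ) {U : Type} [Ring U] [Algebra Aq U] (e : I → U) (i j : I)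

lemma Main (hD : 0 < d i) (hDj : 0 < d j) (hple : p i ≤ 1) (a : ℤ) (ha : a ≤ 0)
    (hpar : p i = 1 → Even a)
    (hS : ∑ n' ∈ range ((1 - a).toNat + 1),
        ((-1) ^ n' * pA ^ (p i * (n' * p j + n'.choose 2))) •
          (edp p d e i ((1 - a).toNat - n') * e j * edp p d e i n') = 0) :
    ∀ n m : ℕ, (m : ℤ) > -(n : ℤ) * a → EeD p d e i j a n m = 0 := by
  intro n
  induction n using Nat.strong_induction_on with
  | _ n IH =>
    rcases n with _ | _ | k
    · intro m hm
      refine L0 p d e i j hD a m ?_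
      push_cast at hm
      omega
    · intro m hm
      have hm' : (1 : ℤ) - a ≤ (m : ℤ) := by push_cast at hm; omega
      have hN : ((1 - a).toNat : ℤ) = 1 - a := Int.toNat_of_nonneg (by omega)
      have key : ∀ t, EeD p d e i j a 1 ((1 - a).toNat + t) = 0 := by
        intro t
        induction t with
        | zero => exact LSerre p d e i j hD hDj hple a ha hpar hS
        | succ t iht =>
          exact LR1 p d e i j hD hDj a ha ((1 - a).toNat + t) (by push_cast [hN]; omega) iht
      obtain ⟨t, ht⟩ : ∃ t, m = (1 - a).toNat + t := ⟨m - (1 - a).toNat, by omega⟩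
      rw [ht]
      exact key t
    · intro m hm
      have hstar := LStar p d e i j hD hDj a (k + 1) m
      have hz : ∀ kk ∈ range (m + 1),
          (pA ^ (p i * ((k + 1) * kk * p j)) *
            vA (p i) (d i) ^ (-(kk : ℤ) * (((k + 1 : ℕ) : ℤ) * a + (m : ℤ) - (kk : ℤ)))) •
          (EeD p d e i j a 1 kk * EeD p d e i j a (k + 1) (m - kk)) = 0 := by
        intro kk hkk
        rw [mem_range] at hkk
        by_cases hcase : (1 : ℤ) - a ≤ (kk : ℤ)
        · rw [IH 1 (by omega) kk (by push_cast; omega), zero_mul, smul_zero]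
        · have e1 : ((m - kk : ℕ) : ℤ) = (m : ℤ) - (kk : ℤ) := by omega
          have h1 : -(((k + 1 : ℕ)) : ℤ) * a = -(((k + 2 : ℕ)) : ℤ) * a + a := by
            push_cast; ring
          have hm2 : (m : ℤ) > -(((k + 2 : ℕ)) : ℤ) * a := by
            have h3 : ((k + 1 + 1 : ℕ) : ℤ) = ((k + 2 : ℕ) : ℤ) := by push_cast; ring
            rw [← h3]
            exact hm
          have h2 : ((m - kk : ℕ) : ℤ) > -(((k + 1 : ℕ)) : ℤ) * a := by
            rw [e1, h1]
            have hkka : (kk : ℤ) ≤ -a := by omega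
            linarith
          rw [IH (k + 1) (by omega) (m - kk) h2, mul_zero, smul_zero]
      rw [Finset.sum_congr rfl hz, Finset.sum_const, smul_zero] at hstar
      exact smul_cancel (isUnit_sInt (p j) (d j) hDj (Nat.succ_pos _)) hstar.symm

end HS


/-- Higher quantum Serre relations: for `i ≠ j` and `m > -n⟨i,j'⟩`,
`e_{i,j;n,m} = ∑_{r+s=m} (−1)^r π_i^{p(n,r;i,j)} (π_iq_i)^{−r(n⟨i,j'⟩+m−1)}
E_i^{(r)}E_j^{(n)}E_i^{(s)} = 0` in the quantum covering group (any algebra whose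
generators satisfy the defining relations together with the `(q,π)`-Serre
relations in the `E`'s and in the `F`'s). -/
theorem higher_serre
    (I : Type) [DecidableEq I] (Bf : I → I → ℤ) (p d : I → ℕ) (aij : I → I → ℤ)
    (hSCD : SCD I Bf p d aij)
    (hbc : ∀ i, d i % 2 = p i)
    (Y : Type) [AddCommGroup Y] (X : Type) [AddCommGroup X]
    (pair : Y → X → ℤ)
    (hpair1 : ∀ μ μ' x, pair (μ + μ') x = pair μ x + pair μ' x)
    (hpair2 : ∀ μ x x', pair μ (x + x') = pair μ x + pair μ x')
    (em : I → X) (ey : I → Y)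
    (hpc : ∀ i i', pair (ey i) (em i') = aij i i')
    (U : Type) [Ring U] [Algebra Aq U]
    (e f : I → U) (k j : Y → U)
    (hU : URels I p d Y X pair em ey U e f k j)
    (hSerreE : ∀ i i', i ≠ i' →
      ∑ n' ∈ Finset.range ((1 - aij i i').toNat + 1),
        ((-1) ^ n' * pA ^ (p i * (n' * p i' + n'.choose 2))) •
          (edp p d e i ((1 - aij i i').toNat - n') * e i' * edp p d e i n') = 0)
    (hSerreF : ∀ i i', i ≠ i' →
      ∑ n' ∈ Finset.range ((1 - aij i i').toNat + 1),
        ((-1) ^ n' * pA ^ (p i * (n' * p i' + n'.choose 2))) •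
          (edp p d f i ((1 - aij i i').toNat - n') * f i' * edp p d f i n') = 0) :
    ∀ (i i' : I), i ≠ i' → ∀ (n m : ℕ), (m : ℤ) > -(n : ℤ) * aij i i' →
      ∑ rr ∈ Finset.range (m + 1),
        ((-1) ^ rr * pA ^ (p i * (n * rr * p i' + rr.choose 2)) *
            (pi' p i * qi d i) ^ (-(rr : ℤ) * ((n : ℤ) * aij i i' + (m : ℤ) - 1))) •
          (edp p d e i rr * edp p d e i' n * edp p d e i (m - rr)) = 0 := by
  intro i i' hij n m hm
  exact HS.Main p d e i i' (hSCD.dpos i) (hSCD.dpos i') (hSCD.par_le i)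
    (aij i i') (hSCD.offdiag i i' hij) (hSCD.odd_even i i') (hSerreE i i' hij) n m hm
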